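/- arXiv:1507.00636 — 2 statements merged into one kernel-verified Lean document; each statement's English description precedes it below -/
import Mathlib

section
/- Let S⁽ⁿ⁾ be the Sylvester matrix of order 2ⁿ and α_i⁽ⁿ⁾(m) = ∑_{k=1}^m S⁽ⁿ⁾_{k i}. Then for every column i with 2 ≤ i ≤ 2ⁿ, one has max_{1 ≤ m ≤ 2^{n+1}} |α_{2ⁿ+i}⁽ⁿ⁺¹⁾(m)| = max_{1 ≤ m ≤ 2^{n+1}} |α_i⁽ⁿ⁺¹⁾(m)| = max_{1 ≤ m ≤ 2ⁿ} |α_i⁽ⁿ⁾(m)|. -/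
/-- The Sylvester matrix of order `2 ^ n`, with rows and columns indexed by
`1, …, 2 ^ n`.  It is defined by the recursion
`S⁽ⁿ⁺¹⁾ = [[S⁽ⁿ⁾, S⁽ⁿ⁾], [S⁽ⁿ⁾, -S⁽ⁿ⁾]]` starting from the `1 × 1` matrix `[1]`
(so that `S⁽¹⁾ = [[1, 1], [1, -1]]`). -/
def Syl : ℕ → ℕ → ℕ → ℝ
  | 0, _, _ => 1
  | n + 1, k, i =>
    if k ≤ 2 ^ n then
      if i ≤ 2 ^ n then Syl n k i else Syl n k (i - 2 ^ n)
    else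
      if i ≤ 2 ^ n then Syl n (k - 2 ^ n) i else -Syl n (k - 2 ^ n) (i - 2 ^ n)

/-- `maxAbs n i = max_{1 ≤ m ≤ 2^n} |α_i⁽ⁿ⁾(m)|`, where
`α_i⁽ⁿ⁾(m) = ∑_{k=1}^m S⁽ⁿ⁾_{k i}` is a partial column sum of the Sylvester
matrix of order `2 ^ n`. -/
noncomputable def maxAbs (n i : ℕ) : ℝ :=
  (Finset.Icc 1 (2 ^ n)).sup' ⟨1, by simp [Nat.one_le_two_pow]⟩
    fun m => |∑ k ∈ Finset.Icc 1 m, Syl n k i|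


open Finset

noncomputable def psum (n i m : ℕ) : ℝ := ∑ k ∈ Finset.Icc 1 m, Syl n k i

lemma psum_low (n i m : ℕ) (hi : i ≤ 2 ^ n) (hm : m ≤ 2 ^ n) :
    psum (n + 1) i m = psum n i m := by
  unfold psum
  refine Finset.sum_congr rfl fun k hk => ?_
  simp only [Finset.mem_Icc] at hk
  simp [Syl, hk.2.trans hm, hi]

lemma psum_low' (n j m : ℕ) (hj : 1 ≤ j) (hm : m ≤ 2 ^ n) :
    psum (n + 1) (2 ^ n + j) m = psum n j m := by
  unfold psum
  refine Finset.sum_congr rfl fun k hk => ?_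
  simp only [Finset.mem_Icc] at hk
  have h1 : ¬ (2 ^ n + j ≤ 2 ^ n) := by omega
  simp [Syl, hk.2.trans hm, h1]

lemma sum_split (n : ℕ) (f : ℕ → ℝ) (m' : ℕ) :
    ∑ k ∈ Finset.Icc 1 (2 ^ n + m'), f k
      = (∑ k ∈ Finset.Icc 1 (2 ^ n), f k) + ∑ j ∈ Finset.Icc 1 m', f (2 ^ n + j) := by
  rw [show (Finset.Icc 1 (2 ^ n + m')) = Finset.Ioc 0 (2 ^ n + m') from rfl,
      show (Finset.Icc 1 (2 ^ n)) = Finset.Ioc 0 (2 ^ n) from rfl,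
      show (Finset.Icc 1 m') = Finset.Ioc 0 m' from rfl,
      ← Finset.sum_Ioc_consecutive f (Nat.zero_le (2 ^ n)) (Nat.le_add_right _ m')]
  congr 1
  rw [show Finset.Ioc (2 ^ n) (2 ^ n + m') = Finset.Ioc (2 ^ n + 0) (2 ^ n + m') by norm_num,
      ← Finset.map_add_left_Ioc, Finset.sum_map]
  rfl

lemma psum_high (n i m' : ℕ) (hi : i ≤ 2 ^ n) (hm : m' ≤ 2 ^ n) :
    psum (n + 1) i (2 ^ n + m') = psum n i (2 ^ n) + psum n i m' := by
  unfold psum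
  rw [sum_split]
  congr 1
  · exact Finset.sum_congr rfl fun k hk => by
      simp only [Finset.mem_Icc] at hk
      simp [Syl, hk.2, hi]
  · refine Finset.sum_congr rfl fun j hj => ?_
    simp only [Finset.mem_Icc] at hj
    have h1 : ¬ (2 ^ n + j ≤ 2 ^ n) := by omega
    simp [Syl, h1, hi]

lemma psum_high' (n j m' : ℕ) (hj : 1 ≤ j) (hj2 : j ≤ 2 ^ n) (hm : m' ≤ 2 ^ n) :
    psum (n + 1) (2 ^ n + j) (2 ^ n + m') = psum n j (2 ^ n) - psum n j m' := by
  unfold psum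
  rw [sum_split, sub_eq_add_neg, ← Finset.sum_neg_distrib]
  congr 1
  · refine Finset.sum_congr rfl fun k hk => ?_
    simp only [Finset.mem_Icc] at hk
    have h1 : ¬ (2 ^ n + j ≤ 2 ^ n) := by omega
    simp [Syl, hk.2, h1]
  · refine Finset.sum_congr rfl fun k hk => ?_
    simp only [Finset.mem_Icc] at hk
    have h1 : ¬ (2 ^ n + j ≤ 2 ^ n) := by omega
    have h2 : ¬ (2 ^ n + k ≤ 2 ^ n) := by omega
    simp [Syl, h1, h2]

lemma colsum (n i : ℕ) (h1 : 2 ≤ i) (h2 : i ≤ 2 ^ n) : psum n i (2 ^ n) = 0 := by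
  induction n generalizing i with
  | zero => omega
  | succ n ih =>
    rw [pow_succ, mul_two]
    by_cases h : i ≤ 2 ^ n
    · rw [psum_high n i (2 ^ n) h le_rfl, ih i h1 h]
      simp
    · obtain ⟨j, rfl⟩ : ∃ j, i = 2 ^ n + j := ⟨i - 2 ^ n, by omega⟩
      rw [psum_high' n j (2 ^ n) (by omega) (by rw [pow_succ] at h2; omega) le_rfl]
      ring

lemma maxAbs_eq (n c i : ℕ)
    (h1 : ∀ m, 1 ≤ m → m ≤ 2 ^ (n + 1) →
      ∃ m', 1 ≤ m' ∧ m' ≤ 2 ^ n ∧ |psum (n + 1) c m| = |psum n i m'|)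
    (h2 : ∀ m', 1 ≤ m' → m' ≤ 2 ^ n → |psum n i m'| = |psum (n + 1) c m'|) :
    maxAbs (n + 1) c = maxAbs n i := by
  unfold maxAbs
  apply le_antisymm
  · apply Finset.sup'_le
    intro m hm
    simp only [Finset.mem_Icc] at hm
    obtain ⟨m', h1', h2', h3'⟩ := h1 m hm.1 hm.2
    calc |∑ k ∈ Finset.Icc 1 m, Syl (n + 1) k c| = |psum n i m'| := h3'
    _ ≤ _ := Finset.le_sup' (fun m => |∑ k ∈ Finset.Icc 1 m, Syl n k i|)
        (Finset.mem_Icc.mpr ⟨h1', h2'⟩)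
  · apply Finset.sup'_le
    intro m hm
    simp only [Finset.mem_Icc] at hm
    calc |∑ k ∈ Finset.Icc 1 m, Syl n k i| = |psum (n + 1) c m| := h2 m hm.1 hm.2
    _ ≤ _ := Finset.le_sup' (fun m => |∑ k ∈ Finset.Icc 1 m, Syl (n + 1) k c|)
        (Finset.mem_Icc.mpr
        ⟨hm.1, hm.2.trans (Nat.pow_le_pow_right (by norm_num) (Nat.le_succ n))⟩)

/-- For every column `2 ≤ i ≤ 2 ^ n`, the maximal absolute partial column sums
of the Sylvester matrices satisfy
`max_m |α_{2^n + i}⁽ⁿ⁺¹⁾(m)| = max_m |α_i⁽ⁿ⁺¹⁾(m)| = max_m |α_i⁽ⁿ⁾(m)|`. -/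
theorem sylvester_maxAbs_step (n : ℕ) (i : ℕ) (hi₁ : 2 ≤ i) (hi₂ : i ≤ 2 ^ n) :
    maxAbs (n + 1) (2 ^ n + i) = maxAbs (n + 1) i ∧
    maxAbs (n + 1) i = maxAbs n i := by
  have hcol := colsum n i hi₁ hi₂
  have e2 : maxAbs (n + 1) i = maxAbs n i := by
    apply maxAbs_eq
    · intro m hm1 hm2
      by_cases h : m ≤ 2 ^ n
      · exact ⟨m, hm1, h, by rw [psum_low n i m hi₂ h]⟩
      · obtain ⟨m', rfl⟩ : ∃ m', m = 2 ^ n + m' := ⟨m - 2 ^ n, by omega⟩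
        rw [pow_succ, mul_two] at hm2
        exact ⟨m', by omega, by omega,
          by rw [psum_high n i m' hi₂ (by omega), hcol, zero_add]⟩
    · intro m' h1' h2'
      rw [psum_low n i m' hi₂ h2']
  have e1 : maxAbs (n + 1) (2 ^ n + i) = maxAbs n i := by
    apply maxAbs_eq
    · intro m hm1 hm2
      by_cases h : m ≤ 2 ^ n
      · exact ⟨m, hm1, h, by rw [psum_low' n i m (by omega) h]⟩
      · obtain ⟨m', rfl⟩ : ∃ m', m = 2 ^ n + m' := ⟨m - 2 ^ n, by omega⟩
        rw [pow_succ, mul_two] at hm2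
        refine ⟨m', by omega, by omega, ?_⟩
        rw [psum_high' n i m' (by omega) hi₂ (by omega), hcol, zero_sub, abs_neg]
    · intro m' h1' h2'
      rw [psum_low' n i m' (by omega) h2']
  exact ⟨e1.trans e2.symm, e2⟩
end

section
/- Let H be an n×n Hadamard matrix, p ≥ 2 a real number, and for each m ≤ n let v(m) be the vector in ℝⁿ with coordinates v(m)_i = ∑_{k=1}^m H_{k i}. Then max_{1 ≤ m ≤ n} ‖v(m)‖_{ℓ_p} ≤ n, where ‖·‖_{ℓ_p} is the p-norm on ℝⁿ. -/
/-- A Hadamard matrix of order `n`: entries are `±1` and rows are pairwise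
orthogonal, i.e. `∑ i, H k i * H m i = n · δ_{k m}`. -/
def IsHadamard {n : ℕ} (H : Matrix (Fin n) (Fin n) ℝ) : Prop :=
  (∀ k i, H k i = 1 ∨ H k i = -1) ∧
  ∀ k m, (∑ i, H k i * H m i) = if k = m then (n : ℝ) else 0

/-- For a Hadamard matrix `H` of order `n` and a real exponent `p ≥ 2`, the
`ℓ_p`-norm of the vector `v(m)` of partial column sums
`v(m)_i = ∑_{k=1}^m H_{k i}` is at most `n`, for every `1 ≤ m ≤ n`. -/
theorem hadamard_partial_sums_lp_bound_ge_two {n : ℕ}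
    (H : Matrix (Fin n) (Fin n) ℝ) (hH : IsHadamard H)
    (p : ℝ) (hp : 2 ≤ p) (m : ℕ) (hm₁ : 1 ≤ m) (hm₂ : m ≤ n) :
    (∑ i, |∑ k ∈ Finset.univ.filter fun k : Fin n => (k : ℕ) < m, H k i| ^ p) ^
        (1 / p) ≤ (n : ℝ) := by
  set F := Finset.univ.filter fun k : Fin n => (k : ℕ) < m with hF
  set S : Fin n → ℝ := fun i => ∑ k ∈ F, H k i with hS
  have hn1 : 1 ≤ n := le_trans hm₁ hm₂
  have hn0 : (0:ℝ) < n := by exact_mod_cast hn1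
  have hp0 : 0 < p := lt_of_lt_of_le (by norm_num) hp
  -- card of F
  have hcard : F.card = m := by
    have himg : Finset.image Fin.val F = Finset.range m := by
      ext x
      simp only [hF, Finset.mem_image, Finset.mem_filter, Finset.mem_univ, true_and,
        Finset.mem_range]
      exact ⟨fun ⟨k, hk, he⟩ => he ▸ hk, fun hx => ⟨⟨x, lt_of_lt_of_le hx hm₂⟩, hx, rfl⟩⟩
    calc F.card = (Finset.image Fin.val F).card :=
          (Finset.card_image_of_injective _ Fin.val_injective).symm
      _ = m := by rw [himg, Finset.card_range]
  -- sum of squares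
  have hsq : ∑ i, (S i) ^ 2 = (m : ℝ) * n := by
    have : ∀ i, (S i) ^ 2 = ∑ k ∈ F, ∑ l ∈ F, H k i * H l i := by
      intro i
      rw [sq, hS, Finset.sum_mul_sum]
    simp_rw [this]
    rw [Finset.sum_comm]
    have h2 : ∀ k ∈ F, (∑ i, ∑ l ∈ F, H k i * H l i) = (n : ℝ) := by
      intro k hk
      rw [Finset.sum_comm]
      have h3 : ∀ l ∈ F, (∑ i, H k i * H l i) = if k = l then (n:ℝ) else 0 :=
        fun l _ => hH.2 k l
      rw [Finset.sum_congr rfl h3]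
      simp [Finset.sum_ite_eq, hk]
    rw [Finset.sum_congr rfl h2, Finset.sum_const, hcard, nsmul_eq_mul]
  -- bound on |S i|
  have hSb : ∀ i, |S i| ≤ (n : ℝ) := by
    intro i
    calc |S i| ≤ ∑ k ∈ F, |H k i| := Finset.abs_sum_le_sum_abs _ _
      _ = ∑ k ∈ F, 1 := by
          refine Finset.sum_congr rfl fun k _ => ?_
          rcases hH.1 k i with h | h <;> rw [h] <;> norm_num
      _ = (m : ℝ) := by rw [Finset.sum_const, hcard]; simp
      _ ≤ n := by exact_mod_cast hm₂
  -- pointwise bound |S i|^p ≤ n^(p-2) * (S i)^2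
  have hpt : ∀ i, |S i| ^ p ≤ (n : ℝ) ^ (p - 2) * (S i) ^ 2 := by
    intro i
    rcases eq_or_ne (S i) 0 with h | h
    · rw [h]; simp [Real.zero_rpow hp0.ne']
    · have habs : 0 < |S i| := abs_pos.2 h
      have : |S i| ^ p = |S i| ^ (p - 2) * |S i| ^ (2:ℝ) := by
        rw [← Real.rpow_add habs]; ring_nf
      rw [this]
      have h2 : |S i| ^ (2:ℝ) = (S i) ^ 2 := by
        rw [show ((2:ℝ)) = ((2:ℕ):ℝ) by norm_num, Real.rpow_natCast, sq_abs]
      rw [h2]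
      exact mul_le_mul_of_nonneg_right
        (Real.rpow_le_rpow (abs_nonneg _) (hSb i) (by linarith)) (sq_nonneg _)
  -- sum bound
  have hsum : ∑ i, |S i| ^ p ≤ (n : ℝ) ^ p := by
    calc ∑ i, |S i| ^ p ≤ ∑ i, (n : ℝ) ^ (p - 2) * (S i) ^ 2 :=
          Finset.sum_le_sum fun i _ => hpt i
      _ = (n : ℝ) ^ (p - 2) * ((m:ℝ) * n) := by rw [← Finset.mul_sum, hsq]
      _ ≤ (n : ℝ) ^ (p - 2) * ((n:ℝ) * n) := by
          have : (m:ℝ) ≤ n := by exact_mod_cast hm₂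
          have hnn : (0:ℝ) ≤ (n:ℝ) ^ (p-2) := Real.rpow_nonneg hn0.le _
          exact mul_le_mul_of_nonneg_left (mul_le_mul_of_nonneg_right this hn0.le) hnn
      _ = (n : ℝ) ^ p := by
          rw [show (n:ℝ) * n = (n:ℝ) ^ (2:ℝ) by
            rw [show ((2:ℝ)) = ((2:ℕ):ℝ) by norm_num, Real.rpow_natCast]; ring]
          rw [← Real.rpow_add hn0]; ring_nf
  -- conclude
  calc (∑ i, |S i| ^ p) ^ (1 / p) ≤ ((n : ℝ) ^ p) ^ (1 / p) := by
        apply Real.rpow_le_rpow _ hsum (by positivity)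
        exact Finset.sum_nonneg fun i _ => Real.rpow_nonneg (abs_nonneg _) _
    _ = (n : ℝ) := by
        rw [← Real.rpow_mul hn0.le, mul_one_div, div_self hp0.ne', Real.rpow_one]
end
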